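/- If M₂ is nilpotent and M₁ is invertible, then the unique solution E of M₁·E + E·M₂ = F satisfies the bound ‖E‖ ≤ Σ_{j=0}^{k−1} ‖M₁⁻¹‖^{j+1}·‖M₂‖^j·‖F‖ in the Frobenius norm, where M₂^k = 0. -/

import Mathlib

/-- The Frobenius norm of a complex matrix. -/
noncomputable def frobNorm {m n : ℕ} (M : Matrix (Fin m) (Fin n) ℂ) : ℝ :=
  Real.sqrt (∑ i : Fin m, ∑ j : Fin n, ‖M i j‖ ^ 2)

attribute [local instance] Matrix.frobeniusNormedAddCommGroup

lemma frobNorm_eq_norm {m n : ℕ} (M : Matrix (Fin m) (Fin n) ℂ) : frobNorm M = ‖M‖ := by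
  rw [Matrix.frobenius_norm_def, frobNorm, Real.sqrt_eq_rpow]
  congr 1
  simp [Real.rpow_two]

lemma norm_mul_pow_le {m n : ℕ} (F : Matrix (Fin m) (Fin n) ℂ)
    (B : Matrix (Fin n) (Fin n) ℂ) (j : ℕ) : ‖F * B ^ j‖ ≤ ‖F‖ * ‖B‖ ^ j := by
  induction j with
  | zero => simp
  | succ j ih =>
    calc ‖F * B ^ (j + 1)‖ = ‖F * B ^ j * B‖ := by rw [pow_succ, ← Matrix.mul_assoc]
    _ ≤ ‖F * B ^ j‖ * ‖B‖ := Matrix.frobenius_norm_mul _ _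
    _ ≤ ‖F‖ * ‖B‖ ^ j * ‖B‖ := by
        exact mul_le_mul_of_nonneg_right ih (norm_nonneg _)
    _ = ‖F‖ * ‖B‖ ^ (j + 1) := by ring

lemma pow_mul_norm_le {m n : ℕ} (A : Matrix (Fin m) (Fin m) ℂ)
    (F : Matrix (Fin m) (Fin n) ℂ) (j : ℕ) : ‖A ^ j * F‖ ≤ ‖A‖ ^ j * ‖F‖ := by
  induction j with
  | zero => simp
  | succ j ih =>
    calc ‖A ^ (j + 1) * F‖ = ‖A * (A ^ j * F)‖ := by rw [pow_succ', Matrix.mul_assoc]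
    _ ≤ ‖A‖ * ‖A ^ j * F‖ := Matrix.frobenius_norm_mul _ _
    _ ≤ ‖A‖ * (‖A‖ ^ j * ‖F‖) := by
        exact mul_le_mul_of_nonneg_left ih (norm_nonneg _)
    _ = ‖A‖ ^ (j + 1) * ‖F‖ := by ring

/-- If `M₂^k = 0` and `M₁` is invertible, the solution of `M₁·E + E·M₂ = F` satisfies
`‖E‖ ≤ Σ_{j=0}^{k−1} ‖M₁⁻¹‖^{j+1}·‖M₂‖^j·‖F‖` in the Frobenius norm. -/
theorem sylvester_nilpotent_bound {m n k : ℕ}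
    (M₁ : Matrix (Fin m) (Fin m) ℂ) (hM₁ : IsUnit M₁)
    (M₂ : Matrix (Fin n) (Fin n) ℂ) (hM₂ : M₂ ^ k = 0)
    (F E : Matrix (Fin m) (Fin n) ℂ) (hE : M₁ * E + E * M₂ = F) :
    frobNorm E ≤ ∑ j ∈ Finset.range k,
      frobNorm M₁⁻¹ ^ (j + 1) * frobNorm M₂ ^ j * frobNorm F := by
  set A := M₁⁻¹ with hA
  set N := -M₂ with hN
  have hdet : IsUnit M₁.det := (Matrix.isUnit_iff_isUnit_det M₁).mp hM₁
  have hAM : A * M₁ = 1 := Matrix.nonsing_inv_mul M₁ hdet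
  have hE' : E = A * F + A * E * N := by
    have : A * (M₁ * E + E * M₂) = A * F := by rw [hE]
    rw [Matrix.mul_add, ← Matrix.mul_assoc, ← Matrix.mul_assoc, hAM, Matrix.one_mul] at this
    rw [hN, Matrix.mul_neg]
    exact eq_add_neg_of_add_eq this
  have key : ∀ i : ℕ,
      E = (∑ j ∈ Finset.range i, A ^ (j + 1) * F * N ^ j) + A ^ i * E * N ^ i := by
    intro i
    induction i with
    | zero => simp
    | succ i ih =>
      rw [Finset.sum_range_succ]
      conv_lhs => rw [ih]
      rw [add_assoc]
      congr 1
      conv_lhs => rw [hE']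
      rw [pow_succ, pow_succ']
      simp [Matrix.mul_add, Matrix.add_mul, Matrix.mul_assoc]
  have hNk : N ^ k = 0 := by
    rw [hN, neg_pow, hM₂, mul_zero]
  have hEsum : E = ∑ j ∈ Finset.range k, A ^ (j + 1) * F * N ^ j := by
    rw [key k, hNk, Matrix.mul_zero, add_zero]
  rw [frobNorm_eq_norm, hEsum]
  calc ‖∑ j ∈ Finset.range k, A ^ (j + 1) * F * N ^ j‖
      ≤ ∑ j ∈ Finset.range k, ‖A ^ (j + 1) * F * N ^ j‖ := norm_sum_le _ _
    _ ≤ ∑ j ∈ Finset.range k, frobNorm M₁⁻¹ ^ (j + 1) * frobNorm M₂ ^ j * frobNorm F := by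
        apply Finset.sum_le_sum
        intro j _
        rw [frobNorm_eq_norm, frobNorm_eq_norm, frobNorm_eq_norm]
        calc ‖A ^ (j + 1) * F * N ^ j‖
            ≤ ‖A ^ (j + 1) * F‖ * ‖N‖ ^ j := norm_mul_pow_le _ _ j
          _ ≤ ‖A‖ ^ (j + 1) * ‖F‖ * ‖N‖ ^ j := by
              exact mul_le_mul_of_nonneg_right (pow_mul_norm_le _ _ _) (pow_nonneg (norm_nonneg _) _)
          _ = ‖M₁⁻¹‖ ^ (j + 1) * ‖M₂‖ ^ j * ‖F‖ := by
              rw [hN, norm_neg]; ring
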